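/- Let d ≥ 3 be odd and a > 0, and define ∇̂f⁽²⁾ : ℝ^d → ℝ^d by ∇̂f⁽²⁾(x) = a∑_{j=1}^{(d−1)/2} ∇̂h_{2j}(x). Then for every j ∈ {0,…,(d−1)/2} and every x ∈ K_{2j+1}, one has ∇̂f⁽²⁾(x) ∈ K_{2j+1}. -/

import Mathlib

open scoped BigOperators RealInnerProductSpace Classical

noncomputable section

/-- The `k`-th standard basis vector of `ℝ^d`, `0`-indexed (so the paper's `e_k` is
`stdBasis d (k-1)`); out-of-range indices give `0`. -/
def stdBasis (d j : ℕ) : EuclideanSpace ℝ (Fin d) :=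
  if h : j < d then EuclideanSpace.single ⟨j, h⟩ 1 else 0

/-- The subgradient oracle `∇̂h_j` (paper's `1`-indexed `j`, so `e_{j+1} = stdBasis d j`
and `e_j = stdBasis d (j-1)`). -/
def gradh (d j : ℕ) (x : EuclideanSpace ℝ (Fin d)) : EuclideanSpace ℝ (Fin d) :=
  if ⟪stdBasis d (j - 1), x⟫ < ⟪stdBasis d j, x⟫ then stdBasis d j - stdBasis d (j - 1)
  else if ⟪stdBasis d j, x⟫ < ⟪stdBasis d (j - 1), x⟫ then stdBasis d (j - 1) - stdBasis d j
  else 0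

/-- `K_j = span{e_1, …, e_j}`. -/
def Ksub (d j : ℕ) : Submodule ℝ (EuclideanSpace ℝ (Fin d)) :=
  Submodule.span ℝ {v | ∃ i < j, v = stdBasis d i}

lemma inner_stdBasis_zero {d m k : ℕ} {x : EuclideanSpace ℝ (Fin d)}
    (hx : x ∈ Ksub d m) (hk : m ≤ k) : ⟪stdBasis d k, x⟫ = 0 := by
  induction hx using Submodule.span_induction with
  | mem v hv =>
    obtain ⟨i, hi, rfl⟩ := hv
    unfold stdBasis
    split_ifs with h1 h2 h2
    · rw [EuclideanSpace.inner_single_left, EuclideanSpace.single_apply]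
      have : i ≠ k := by omega
      simp [Fin.ext_iff, this.symm]
    · simp
    · simp
    · simp
  | zero => simp
  | add u v _ _ hu hv => rw [inner_add_right, hu, hv]; ring
  | smul c u _ hu => rw [real_inner_smul_right, hu]; ring

lemma stdBasis_mem {d m k : ℕ} (h : k < m) : stdBasis d k ∈ Ksub d m :=
  Submodule.subset_span ⟨k, h, rfl⟩

theorem stmt8 (d : ℕ) (hd : 3 ≤ d) (hodd : d % 2 = 1) (a : ℝ) (ha : 0 < a)
    (gf : EuclideanSpace ℝ (Fin d) → EuclideanSpace ℝ (Fin d))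
    (hgf : ∀ x, gf x =
      a • ∑ j ∈ Finset.Icc 1 ((d - 1) / 2), gradh d (2 * j) x) :
    ∀ j ∈ Finset.range ((d - 1) / 2 + 1), ∀ x ∈ Ksub d (2 * j + 1), gf x ∈ Ksub d (2 * j + 1) := by
  intro j _ x hx
  rw [hgf]
  refine Submodule.smul_mem _ _ (Submodule.sum_mem _ fun i hi => ?_)
  simp only [Finset.mem_Icc] at hi
  by_cases hij : i ≤ j
  · unfold gradh
    have h1 : stdBasis d (2 * i) ∈ Ksub d (2 * j + 1) := stdBasis_mem (by omega)
    have h2 : stdBasis d (2 * i - 1) ∈ Ksub d (2 * j + 1) := stdBasis_mem (by omega)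
    split_ifs
    · exact Submodule.sub_mem _ h1 h2
    · exact Submodule.sub_mem _ h2 h1
    · exact Submodule.zero_mem _
  · have h1 : ⟪stdBasis d (2 * i), x⟫ = 0 := inner_stdBasis_zero hx (by omega)
    have h2 : ⟪stdBasis d (2 * i - 1), x⟫ = 0 := inner_stdBasis_zero hx (by omega)
    unfold gradh
    rw [h1, h2]
    simp [Submodule.zero_mem]

end
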